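/- For every countable ordinal α ≥ 2, non*(conv_α) = ℵ₀: there exists a countable family A of infinite subsets of ω^α+1 such that every B ∈ conv_α has finite intersection with some member of A. -/

import Mathlib

open Set Filter Topology Ordinal

noncomputable section

/-- The derived set of `A`: the set of accumulation (limit) points of `A`. -/
def derivSet {X : Type*} [TopologicalSpace X] (A : Set X) : Set X :=
  {p | p ∈ closure (A \ {p})}

/-- The ordinal space `ω^a + 1 = [0, ω^a]` with the (order) topology. -/
abbrev OrdSpace (a : Ordinal) : Type _ := ↥(Set.Iic (omega0 ^ a))

/-- The ideal `conv_a` on `ω^a + 1`: sets with finite derived set. -/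
def convIdeal (a : Ordinal) : Set (Set (OrdSpace a)) :=
  {A | (derivSet A).Finite}

/-- `I` is an ideal of subsets. -/
structure IsIdeal {S : Type*} (I : Set (Set S)) : Prop where
  empty_mem : ∅ ∈ I
  subset_mem : ∀ {A B : Set S}, A ⊆ B → B ∈ I → A ∈ I
  union_mem : ∀ {A B : Set S}, A ∈ I → B ∈ I → A ∪ B ∈ I

/-- The subsequence of `f` indexed by `A` converges to `x`. -/
def ConvAlong {X : Type*} [TopologicalSpace X] (f : ℕ → X) (A : Set ℕ) (x : X) : Prop :=
  ∀ U ∈ nhds x, {n ∈ A | f n ∉ U}.Finite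

/-- Katětov order: `J ≤_K I`, where `I` lives on `X` and `J` on `Y`. -/
def KatetovLE {X Y : Type*} (J : Set (Set Y)) (I : Set (Set X)) : Prop :=
  ∃ f : X → Y, ∀ A ∈ J, f ⁻¹' A ∈ I

/-- `X ∈ FinBW(I)`: every sequence in `X` has a convergent subsequence indexed
by an `I`-positive set. -/
def InFinBW (I : Set (Set ℕ)) (X : Type*) [TopologicalSpace X] : Prop :=
  ∀ f : ℕ → X, ∃ A : Set ℕ, A ∉ I ∧ ∃ x : X, ConvAlong f A x

universe u
lemma mem_closure_of_natFamily {s : Set Ordinal.{u}} {o : Ordinal.{u}} (M : Set ℕ)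
    (hne : M.Nonempty) (f : ℕ → Ordinal.{u}) (hf : ∀ m ∈ M, f m ∈ s)
    (hub : ∀ m ∈ M, f m ≤ o) (hcof : ∀ b < o, ∃ m ∈ M, b < f m) : o ∈ closure s := by
  rw [Ordinal.mem_closure_iff_iSup]
  haveI : Nonempty (ULift.{u} ↥M) := ⟨⟨⟨hne.choose, hne.choose_spec⟩⟩⟩
  refine ⟨ULift.{u} ↥M, inferInstance, fun i => f i.down, fun i => hf _ i.down.2, ?_⟩
  apply le_antisymm
  · exact ciSup_le fun i => hub _ i.down.2
  · by_contra hlt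
    push_neg at hlt
    obtain ⟨m, hmM, hm⟩ := hcof _ hlt
    exact absurd (Ordinal.le_iSup (fun i : ULift.{u} ↥M => f i.down) ⟨⟨m, hmM⟩⟩) hm.not_ge

/-- `non*(conv_α) = ℵ₀`: there is a countable family of infinite subsets of `ω^α+1`
such that every member of `conv_α` is almost disjoint from some member of the family. -/
theorem stmt18 (a : Ordinal) (ha : 2 ≤ a) (hac : a.card ≤ Cardinal.aleph0) :
    ∃ 𝒜 : Set (Set (OrdSpace a)), 𝒜.Countable ∧ (∀ A ∈ 𝒜, A.Infinite) ∧
      ∀ B ∈ convIdeal a, ∃ A ∈ 𝒜, (A ∩ B).Finite := by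
  have hw2 : (omega0 : Ordinal) ^ (2 : Ordinal) ≤ omega0 ^ a :=
    opow_le_opow_right omega0_pos ha
  have hcol : ∀ n : ℕ, omega0 * (n + 1 : ℕ) ≤ omega0 ^ a := by
    intro n
    calc omega0 * ((n + 1 : ℕ) : Ordinal) ≤ omega0 * omega0 :=
          mul_le_mul_right (nat_lt_omega0 (n + 1)).le _
      _ = omega0 ^ (2 : Ordinal) := by
          rw [← one_add_one_eq_two, opow_one_add, opow_one]
      _ ≤ _ := hw2
  have hmulsucc : ∀ n : ℕ, omega0 * ((n + 1 : ℕ) : Ordinal) = omega0 * n + omega0 := by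
    intro n
    push_cast
    rw [mul_add, mul_one]
  have hlt : ∀ n m : ℕ, omega0 * n + (m : Ordinal) < omega0 * ((n + 1 : ℕ) : Ordinal) := by
    intro n m
    rw [hmulsucc n]
    exact add_lt_add_right (nat_lt_omega0 m) _
  set pt : ℕ → ℕ → OrdSpace a := fun n m =>
    ⟨omega0 * n + m, (hlt n m).le.trans (hcol n)⟩ with hpt
  set q : ℕ → OrdSpace a := fun n => ⟨omega0 * ((n + 1 : ℕ) : Ordinal), hcol n⟩ with hqdef
  set A : ℕ → Set (OrdSpace a) := fun n =>
    {x : OrdSpace a | ∃ m : ℕ, (x : Ordinal) = omega0 * n + m} with hA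
  refine ⟨Set.range A, Set.countable_range A, ?_, ?_⟩
  · rintro _ ⟨n, rfl⟩
    refine Set.infinite_of_injective_forall_mem (f := pt n) ?_ (fun m => ⟨m, rfl⟩)
    intro m m' hmm
    have h2 : omega0 * (n : Ordinal) + m = omega0 * n + m' := congrArg Subtype.val hmm
    have : ((m : Ordinal)) = m' := add_left_cancel_iff.1 h2
    exact_mod_cast this
  · intro B hB
    by_contra hcon
    push_neg at hcon
    have hinf : ∀ n : ℕ, (A n ∩ B).Infinite := by
      intro n
      exact hcon (A n) ⟨n, rfl⟩
    -- For each n, the set of columns entries of B in column n is infinite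
    have hM : ∀ n : ℕ, {m : ℕ | pt n m ∈ B}.Infinite := by
      intro n
      by_contra hfin
      rw [Set.not_infinite] at hfin
      have hsub : A n ∩ B ⊆ pt n '' {m : ℕ | pt n m ∈ B} := by
        rintro x ⟨⟨m, hm⟩, hxB⟩
        have hx : x = pt n m := Subtype.ext hm
        exact ⟨m, show pt n m ∈ B from hx ▸ hxB, hx.symm⟩
      exact (hinf n) ((hfin.image _).subset hsub)
    have hq : ∀ n : ℕ, q n ∈ derivSet B := by
      intro n
      have hMn := hM n
      show (q n : OrdSpace a) ∈ closure (B \ {q n})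
      rw [closure_subtype]
      obtain ⟨m0, hm0⟩ := hMn.nonempty
      refine mem_closure_of_natFamily {m : ℕ | pt n m ∈ B} ⟨m0, hm0⟩
        (fun m => omega0 * n + m) (fun m hmB => ?_) (fun m _ => (hlt n m).le) ?_
      · refine ⟨pt n m, ⟨hmB, ?_⟩, rfl⟩
        intro hxq
        have : (pt n m : Ordinal) = (q n : Ordinal) := congrArg Subtype.val hxq
        exact absurd this (hlt n m).ne
      · intro b hb
        rw [hqdef] at hb
        simp only at hb
        rw [hmulsucc n, Ordinal.lt_add_iff omega0_ne_zero] at hb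
        obtain ⟨d, hd, hbd⟩ := hb
        obtain ⟨k, rfl⟩ := Ordinal.lt_omega0.1 hd
        obtain ⟨m, hmB, hkm⟩ := hMn.exists_gt k
        refine ⟨m, hmB, hbd.trans_lt ?_⟩
        exact add_lt_add_right (by exact_mod_cast hkm) _
    have hinj : Function.Injective q := by
      have hsm : StrictMono fun n : ℕ => omega0 * ((n + 1 : ℕ) : Ordinal) := by
        intro n n' hnn
        exact (mul_lt_mul_iff_right₀ omega0_pos).2 (by exact_mod_cast Nat.succ_lt_succ hnn)
      intro n n' h
      exact hsm.injective (congrArg Subtype.val h)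
    exact (Set.infinite_of_injective_forall_mem hinj hq) hB
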